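/- arXiv:2211.00260 — 2 statements merged into one kernel-verified Lean document; each statement's English description precedes it below -/
import Mathlib

section
/- Let S(s) = ∑_{n ≤ N} a_n n^{-s} and S_u(s) = ∑_{2 ≤ n ≤ u} a_n n^{-s}. Then for any real σ₀ ≤ σ and t ∈ ℝ, |S(σ+it)|² ≪ |a_1|² + |S(σ₀+it)|² + ∫_2^N |S_u(σ₀+it)|² du/(u log u), with an absolute implied constant. -/
open Complex Finset MeasureTheory Set intervalIntegral

set_option linter.unusedVariables false

private lemma aux_bdd_integrable {E : Type*} [NormedAddCommGroup E] {f : ℝ → E} {a b M : ℝ}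
    (hab : a ≤ b) (hf : AEStronglyMeasurable f (volume.restrict (Set.Ioc a b)))
    (hM : ∀ u ∈ Set.Ioc a b, ‖f u‖ ≤ M) : IntervalIntegrable f volume a b := by
  rw [intervalIntegrable_iff_integrableOn_Ioc_of_le hab]
  exact ⟨hf, HasFiniteIntegral.restrict_of_bounded (C := M) measure_Ioc_lt_top
    ((ae_restrict_iff' measurableSet_Ioc).2 (ae_of_all _ hM))⟩

private lemma aux_measT (b : ℕ → ℂ) : Measurable (fun u : ℝ => ∑ n ∈ Finset.Icc 2 ⌊u⌋₊, b n) :=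
  Measurable.comp (f := Nat.floor) (g := fun k : ℕ => ∑ n ∈ Finset.Icc 2 k, b n) measurable_from_nat Nat.measurable_floor

private lemma aux_Tbdd (b : ℕ → ℂ) (N : ℕ) {u : ℝ} (hu : u ≤ N) :
    ‖∑ n ∈ Finset.Icc 2 ⌊u⌋₊, b n‖ ≤ ∑ n ∈ Finset.Icc 2 N, ‖b n‖ := by
  refine (norm_sum_le _ _).trans (Finset.sum_le_sum_of_subset_of_nonneg ?_
    (fun _ _ _ => norm_nonneg _))
  exact Finset.Icc_subset_Icc_right ((Nat.floor_le_floor hu).trans_eq (Nat.floor_natCast N))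

private lemma aux_rpow_contOn {c a b : ℝ} (ha : 0 < a) :
    ContinuousOn (fun u : ℝ => u ^ c) (Set.Ioc a b) :=
  ContinuousOn.rpow_const continuousOn_id
    (fun x hx => Or.inl (ne_of_gt (lt_of_lt_of_le ha hx.1.le)))

private lemma aux_ind_integrable {δ : ℝ} (hδ : 0 < δ) (n : ℕ) {a c : ℝ} (ha : 2 ≤ a)
    (hac : a ≤ c) :
    IntervalIntegrable (fun u : ℝ => Set.indicator (Set.Ici (n : ℝ))
      (fun u => u ^ (-δ - 1)) u) volume a c := by
  refine aux_bdd_integrable hac ?_ (M := 1) ?_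
  · exact (((aux_rpow_contOn (by linarith : (0:ℝ) < a)).aestronglyMeasurable
      measurableSet_Ioc)).indicator measurableSet_Ici
  · intro u hu
    have hu1 : (1:ℝ) ≤ u := by linarith [hu.1]
    rw [Set.indicator_apply]
    split_ifs
    · rw [Real.norm_eq_abs, _root_.abs_of_nonneg (Real.rpow_nonneg (by linarith) _)]
      exact Real.rpow_le_one_of_one_le_of_nonpos hu1 (by linarith)
    · simp

private lemma aux_int_ind {δ : ℝ} (hδ : 0 < δ) {n N : ℕ} (h2 : 2 ≤ n) (hn : n ≤ N) :
    δ * ∫ u in (2:ℝ)..(N:ℝ), Set.indicator (Set.Ici (n : ℝ)) (fun u => u ^ (-δ - 1)) u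
      = (n:ℝ) ^ (-δ) - (N:ℝ) ^ (-δ) := by
  have h2n : (2:ℝ) ≤ (n:ℝ) := by exact_mod_cast h2
  have hnN : (n:ℝ) ≤ (N:ℝ) := by exact_mod_cast hn
  have hsplit := intervalIntegral.integral_add_adjacent_intervals
    (aux_ind_integrable hδ n le_rfl h2n) (aux_ind_integrable hδ n h2n hnN)
  have hz : (∫ u in (2:ℝ)..(n:ℝ), Set.indicator (Set.Ici (n : ℝ))
      (fun u => u ^ (-δ - 1)) u) = 0 := by
    rw [← intervalIntegral.integral_zero (a := (2:ℝ)) (b := (n:ℝ)) (μ := volume) (E := ℝ)]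
    apply intervalIntegral.integral_congr_ae
    have h0 : ∀ᵐ u : ℝ, u ≠ (n : ℝ) := by
      rw [MeasureTheory.ae_iff]
      simp only [ne_eq, not_not, Set.setOf_eq_eq_singleton]
      exact measure_singleton _
    filter_upwards [h0] with u hu hmem
    rw [Set.uIoc_of_le h2n] at hmem
    rw [Set.indicator_apply, if_neg]
    simp only [Set.mem_Ici, not_le]
    exact lt_of_le_of_ne hmem.2 hu
  have hmain : (∫ u in (n:ℝ)..(N:ℝ), Set.indicator (Set.Ici (n : ℝ))
      (fun u => u ^ (-δ - 1)) u) = ∫ u in (n:ℝ)..(N:ℝ), u ^ (-δ - 1) := by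
    apply intervalIntegral.integral_congr
    intro u hu
    rw [Set.uIcc_of_le hnN] at hu
    exact Set.indicator_of_mem (hu.1 : (n:ℝ) ≤ u) _
  have hrpow : (∫ u in (n:ℝ)..(N:ℝ), u ^ (-δ - 1))
      = ((N:ℝ) ^ (-δ) - (n:ℝ) ^ (-δ)) / (-δ) := by
    rw [integral_rpow (Or.inr ⟨by intro h; exact absurd h (by linarith), ?_⟩)]
    · norm_num
    · rw [Set.uIcc_of_le hnN]
      intro h
      exact absurd h.1 (by linarith)
  rw [← hsplit, hz, zero_add, hmain, hrpow]
  have hd : δ * δ⁻¹ = 1 := mul_inv_cancel₀ (by linarith)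
  field_simp
  linear_combination (0:ℝ) * hd

private lemma aux_decomp {N : ℕ} (hN : 2 ≤ N) (b : ℕ → ℂ) {δ : ℝ} (hδ : 0 < δ) :
    ∑ n ∈ Finset.Icc 1 N, b n * (((n:ℝ) ^ (-δ) : ℝ) : ℂ)
      = b 1 + (((N:ℝ) ^ (-δ) : ℝ) : ℂ) * (∑ n ∈ Finset.Icc 2 N, b n)
        + (δ : ℂ) * ∫ u in (2:ℝ)..(N:ℝ),
            (∑ n ∈ Finset.Icc 2 ⌊u⌋₊, b n) * ((u ^ (-δ - 1) : ℝ) : ℂ) := by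
  have hN2 : (2:ℝ) ≤ (N:ℝ) := by exact_mod_cast hN
  have hins : Finset.Icc 1 N = insert 1 (Finset.Icc 2 N) := by
    ext m; simp only [Finset.mem_Icc, Finset.mem_insert]; omega
  rw [hins, Finset.sum_insert (by simp)]
  have hterm : ∀ n ∈ Finset.Icc 2 N,
      b n * (((n:ℝ) ^ (-δ) : ℝ) : ℂ)
        = (((N:ℝ) ^ (-δ) : ℝ) : ℂ) * b n
          + (δ:ℂ) * ∫ u in (2:ℝ)..(N:ℝ),
              b n * (((Set.Ici (n:ℝ)).indicator (fun u => u ^ (-δ-1)) u : ℝ) : ℂ) := by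
    intro n hn
    rw [Finset.mem_Icc] at hn
    have hreal : (n:ℝ) ^ (-δ) = (N:ℝ) ^ (-δ)
        + δ * ∫ u in (2:ℝ)..(N:ℝ), (Set.Ici (n:ℝ)).indicator (fun u => u ^ (-δ-1)) u := by
      linarith [aux_int_ind hδ hn.1 hn.2]
    have hc : (((n:ℝ) ^ (-δ) : ℝ) : ℂ) = (((N:ℝ) ^ (-δ) : ℝ) : ℂ)
        + (δ:ℂ) * ∫ u in (2:ℝ)..(N:ℝ),
            (((Set.Ici (n:ℝ)).indicator (fun u => u ^ (-δ-1)) u : ℝ) : ℂ) := by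
      rw [intervalIntegral.integral_ofReal]
      exact_mod_cast congrArg Complex.ofReal hreal
    rw [hc, intervalIntegral.integral_const_mul]
    ring
  rw [Finset.sum_congr rfl hterm, Finset.sum_add_distrib, ← Finset.mul_sum, ← Finset.mul_sum]
  have hFint : ∀ n ∈ Finset.Icc 2 N, IntervalIntegrable
      (fun u : ℝ => b n * (((Set.Ici (n:ℝ)).indicator (fun u => u ^ (-δ-1)) u : ℝ) : ℂ))
      volume 2 (N:ℝ) := by
    intro n _
    refine aux_bdd_integrable hN2 ?_ (M := ‖b n‖) ?_
    · exact (Complex.continuous_ofReal.comp_aestronglyMeasurable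
        (((aux_rpow_contOn (by norm_num : (0:ℝ) < 2)).aestronglyMeasurable
          measurableSet_Ioc).indicator measurableSet_Ici)).const_mul (b n)
    · intro u hu
      rw [norm_mul, Complex.norm_real, Real.norm_eq_abs]
      have : |(Set.Ici (n:ℝ)).indicator (fun u => u ^ (-δ-1)) u| ≤ 1 := by
        rw [Set.indicator_apply]
        split_ifs
        · rw [_root_.abs_of_nonneg (Real.rpow_nonneg (by linarith [hu.1]) _)]
          exact Real.rpow_le_one_of_one_le_of_nonpos (by linarith [hu.1]) (by linarith)
        · simp
      nlinarith [norm_nonneg (b n)]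
  rw [← intervalIntegral.integral_finset_sum hFint]
  have hcongr : (∫ u in (2:ℝ)..(N:ℝ), ∑ n ∈ Finset.Icc 2 N,
        b n * (((Set.Ici (n:ℝ)).indicator (fun u => u ^ (-δ-1)) u : ℝ) : ℂ))
      = ∫ u in (2:ℝ)..(N:ℝ), (∑ n ∈ Finset.Icc 2 ⌊u⌋₊, b n) * ((u ^ (-δ - 1) : ℝ) : ℂ) := by
    apply intervalIntegral.integral_congr
    intro u hu
    rw [Set.uIcc_of_le hN2] at hu
    have hu0 : (0:ℝ) ≤ u := by linarith [hu.1]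
    have hfl : ⌊u⌋₊ ≤ N := by
      have := Nat.floor_le_floor hu.2
      rwa [Nat.floor_natCast] at this
    have hfilter : Finset.filter (fun n : ℕ => (n:ℝ) ≤ u) (Finset.Icc 2 N)
        = Finset.Icc 2 ⌊u⌋₊ := by
      ext m
      simp only [Finset.mem_filter, Finset.mem_Icc, Nat.le_floor_iff hu0]
      constructor
      · rintro ⟨⟨h2, _⟩, hm⟩; exact ⟨h2, hm⟩
      · rintro ⟨h2, hm⟩
        exact ⟨⟨h2, (Nat.le_floor hm).trans hfl⟩, hm⟩
    simp only [Set.indicator_apply, Set.mem_Ici, apply_ite Complex.ofReal,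
      Complex.ofReal_zero, mul_ite, mul_zero]
    rw [← Finset.sum_filter, hfilter, ← Finset.sum_mul]
  rw [hcongr]
  norm_num
  ring

private lemma aux_opt {A Iv : ℝ} (hI0 : 0 ≤ Iv)
    (hb : ∀ ε : ℝ, 0 < ε → A ≤ ε / 2 * Iv + 1 / (2 * ε)) : A ≤ Real.sqrt Iv := by
  rcases eq_or_lt_of_le hI0 with hz | hpos
  · rw [← hz, Real.sqrt_zero]
    by_contra hA
    push_neg at hA
    have h1 := hb (1 / A) (by positivity)
    rw [← hz] at h1
    have h2 : 1 / (2 * (1 / A)) = A / 2 := by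
      field_simp
    linarith
  · have hspos : 0 < Real.sqrt Iv := Real.sqrt_pos.2 hpos
    have hs2 : Real.sqrt Iv ^ 2 = Iv := Real.sq_sqrt hI0
    have h1 := hb (1 / Real.sqrt Iv) (by positivity)
    have h2 : 1 / Real.sqrt Iv / 2 * Iv + 1 / (2 * (1 / Real.sqrt Iv)) = Real.sqrt Iv := by
      field_simp
      linear_combination (-1:ℝ) * hs2
    linarith [h2 ▸ h1]

private lemma aux_CS {N : ℕ} (hN : 2 ≤ N) (b : ℕ → ℂ) {δ : ℝ} (hδ : 0 < δ) :
    δ * ‖∫ u in (2:ℝ)..(N:ℝ), (∑ n ∈ Finset.Icc 2 ⌊u⌋₊, b n) * ((u ^ (-δ - 1) : ℝ) : ℂ)‖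
      ≤ Real.sqrt (∫ u in (2:ℝ)..(N:ℝ),
          ‖∑ n ∈ Finset.Icc 2 ⌊u⌋₊, b n‖ ^ 2 / (u * Real.log u)) := by
  have hN2 : (2:ℝ) ≤ (N:ℝ) := by exact_mod_cast hN
  set T : ℝ → ℂ := fun u => ∑ n ∈ Finset.Icc 2 ⌊u⌋₊, b n with hT
  set B : ℝ := ∑ n ∈ Finset.Icc 2 N, ‖b n‖ with hB
  have hB0 : 0 ≤ B := Finset.sum_nonneg fun _ _ => norm_nonneg _
  set I : ℝ := ∫ u in (2:ℝ)..(N:ℝ), ‖T u‖ ^ 2 / (u * Real.log u) with hI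
  set Y : ℝ → ℝ := fun u => δ ^ 2 * (u * Real.log u) * (u ^ (-δ - 1)) ^ 2 with hYdef
  have hlog2 : (0:ℝ) < Real.log 2 := Real.log_pos one_lt_two
  have hsub : Set.Ioc (2:ℝ) (N:ℝ) ⊆ {(0:ℝ)}ᶜ := by
    intro u hu; simp only [Set.mem_compl_iff, Set.mem_singleton_iff]
    intro h; rw [h] at hu; linarith [hu.1]
  -- integrability of X
  have hXint : IntervalIntegrable (fun u => ‖T u‖ ^ 2 / (u * Real.log u)) volume 2 (N:ℝ) := by
    refine aux_bdd_integrable hN2 ?_ (M := B ^ 2 / (2 * Real.log 2)) ?_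
    · exact ((((aux_measT b).norm.pow_const 2).div
        (measurable_id.mul Real.measurable_log)).aestronglyMeasurable)
    · intro u hu
      have hu2 : (2:ℝ) ≤ u := hu.1.le
      have hlogu : Real.log 2 ≤ Real.log u := Real.log_le_log (by norm_num) hu2
      have hw : 2 * Real.log 2 ≤ u * Real.log u :=
        mul_le_mul hu2 hlogu hlog2.le (by linarith)
      have hTB := aux_Tbdd b N hu.2
      rw [Real.norm_eq_abs, _root_.abs_of_nonneg (div_nonneg (sq_nonneg _)
        (by nlinarith))]
      exact div_le_div₀ (by positivity) (pow_le_pow_left₀ (norm_nonneg _) hTB 2)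
        (by positivity) hw
  -- integrability of h
  have hhint : IntervalIntegrable (fun u => δ * (‖T u‖ * u ^ (-δ - 1))) volume 2 (N:ℝ) := by
    refine aux_bdd_integrable hN2 ?_ (M := δ * B) ?_
    · exact (((aux_measT b).norm.aestronglyMeasurable.mul
        ((aux_rpow_contOn (by norm_num)).aestronglyMeasurable measurableSet_Ioc)).const_mul δ)
    · intro u hu
      have hu2 : (2:ℝ) ≤ u := hu.1.le
      have hq0 : (0:ℝ) ≤ u ^ (-δ - 1) := Real.rpow_nonneg (by linarith) _
      have hq1 : u ^ (-δ - 1) ≤ 1 :=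
        Real.rpow_le_one_of_one_le_of_nonpos (by linarith) (by linarith)
      have hTB := aux_Tbdd b N hu.2
      rw [Real.norm_eq_abs, _root_.abs_of_nonneg (by positivity)]
      calc δ * (‖T u‖ * u ^ (-δ - 1)) ≤ δ * (B * 1) :=
            mul_le_mul_of_nonneg_left (mul_le_mul hTB hq1 hq0 hB0) hδ.le
        _ = δ * B := by ring
  -- integrability of Y
  have hYint : IntervalIntegrable Y volume 2 (N:ℝ) := by
    refine aux_bdd_integrable hN2 ?_ (M := δ ^ 2 * ((N:ℝ) * Real.log (N:ℝ))) ?_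
    · refine ContinuousOn.aestronglyMeasurable ?_ measurableSet_Ioc
      exact (continuousOn_const.mul (continuousOn_id.mul
        (Real.continuousOn_log.mono hsub))).mul ((aux_rpow_contOn (by norm_num)).pow 2)
    · intro u hu
      have hu2 : (2:ℝ) ≤ u := hu.1.le
      have hlogu : (0:ℝ) ≤ Real.log u := Real.log_nonneg (by linarith)
      have hq0 : (0:ℝ) ≤ u ^ (-δ - 1) := Real.rpow_nonneg (by linarith) _
      have hq1 : u ^ (-δ - 1) ≤ 1 :=
        Real.rpow_le_one_of_one_le_of_nonpos (by linarith) (by linarith)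
      have hlogN : Real.log u ≤ Real.log (N:ℝ) := Real.log_le_log (by linarith) hu.2
      rw [Real.norm_eq_abs, _root_.abs_of_nonneg (by positivity)]
      have h1 : u * Real.log u ≤ (N:ℝ) * Real.log (N:ℝ) :=
        mul_le_mul hu.2 hlogN hlogu (by linarith)
      have h2 : (u ^ (-δ - 1)) ^ 2 ≤ 1 := by nlinarith
      have hNlog0 : (0:ℝ) ≤ (N:ℝ) * Real.log (N:ℝ) :=
        mul_nonneg (by linarith) (Real.log_nonneg (by linarith))
      calc δ ^ 2 * (u * Real.log u) * (u ^ (-δ - 1)) ^ 2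
          = δ ^ 2 * ((u * Real.log u) * (u ^ (-δ - 1)) ^ 2) := by ring
        _ ≤ δ ^ 2 * (((N:ℝ) * Real.log (N:ℝ)) * 1) :=
            mul_le_mul_of_nonneg_left (mul_le_mul h1 h2 (sq_nonneg _) hNlog0) (sq_nonneg δ)
        _ = δ ^ 2 * ((N:ℝ) * Real.log (N:ℝ)) := by ring
  -- integrability of δ * u ^ (-δ-1)
  have hqint : IntervalIntegrable (fun u : ℝ => δ * u ^ (-δ - 1)) volume 2 (N:ℝ) := by
    refine aux_bdd_integrable hN2 ?_ (M := δ) ?_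
    · exact (((aux_rpow_contOn (by norm_num)).aestronglyMeasurable
        measurableSet_Ioc).const_mul δ)
    · intro u hu
      have hu2 : (2:ℝ) ≤ u := hu.1.le
      have hq0 : (0:ℝ) ≤ u ^ (-δ - 1) := Real.rpow_nonneg (by linarith) _
      have hq1 : u ^ (-δ - 1) ≤ 1 :=
        Real.rpow_le_one_of_one_le_of_nonpos (by linarith) (by linarith)
      rw [Real.norm_eq_abs, _root_.abs_of_nonneg (by positivity)]
      nlinarith
  -- ∫ Y ≤ 1
  have hW1 : (∫ u in (2:ℝ)..(N:ℝ), Y u) ≤ 1 := by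
    have hmono := intervalIntegral.integral_mono_on hN2 hYint hqint ?_
    · have hrp : (∫ u in (2:ℝ)..(N:ℝ), u ^ (-δ - 1))
          = ((N:ℝ) ^ (-δ) - (2:ℝ) ^ (-δ)) / (-δ) := by
        rw [integral_rpow (Or.inr ⟨by intro hc; exact absurd hc (by linarith), by
          rw [Set.uIcc_of_le hN2]; intro hc; linarith [hc.1]⟩)]
        norm_num
      rw [intervalIntegral.integral_const_mul, hrp] at hmono
      have hd : δ * δ⁻¹ = 1 := mul_inv_cancel₀ (by linarith)
      have h21 : (2:ℝ) ^ (-δ) ≤ 1 :=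
        Real.rpow_le_one_of_one_le_of_nonpos (by norm_num) (by linarith)
      have hN0 : (0:ℝ) ≤ (N:ℝ) ^ (-δ) := Real.rpow_nonneg (by linarith) _
      have heq : δ * (((N:ℝ) ^ (-δ) - (2:ℝ) ^ (-δ)) / (-δ))
          = (2:ℝ) ^ (-δ) - (N:ℝ) ^ (-δ) := by
        field_simp
        linear_combination (0:ℝ) * hd
      rw [heq] at hmono
      linarith
    · intro u hu
      have hu0 : (0:ℝ) < u := by linarith [hu.1]
      have key2 : δ * Real.log u ≤ u ^ δ := by
        rw [Real.rpow_def_of_pos hu0]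
        have := Real.add_one_le_exp (Real.log u * δ)
        linarith [this, mul_comm δ (Real.log u)]
      have hq_eq : u * u ^ (-δ - 1) = u ^ (-δ) := by
        nth_rewrite 1 [← Real.rpow_one u]
        rw [← Real.rpow_add hu0]
        norm_num
      have hud : u ^ δ * u ^ (-δ) = 1 := by
        rw [← Real.rpow_add hu0]
        norm_num
      have hq0 : (0:ℝ) ≤ u ^ (-δ - 1) := Real.rpow_nonneg hu0.le _
      calc Y u = (δ * u ^ (-δ - 1)) * ((δ * Real.log u) * (u * u ^ (-δ - 1))) := by
            rw [hYdef]; ring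
        _ = (δ * u ^ (-δ - 1)) * ((δ * Real.log u) * u ^ (-δ)) := by rw [hq_eq]
        _ ≤ (δ * u ^ (-δ - 1)) * (u ^ δ * u ^ (-δ)) := by
            apply mul_le_mul_of_nonneg_left
              (mul_le_mul_of_nonneg_right key2 (Real.rpow_nonneg hu0.le _)) (by positivity)
        _ = δ * u ^ (-δ - 1) := by rw [hud, mul_one]
  -- I ≥ 0
  have hI0 : 0 ≤ I := by
    rw [hI]
    apply intervalIntegral.integral_nonneg hN2
    intro u hu
    exact div_nonneg (sq_nonneg _) (mul_nonneg (by linarith [hu.1])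
      (Real.log_nonneg (by linarith [hu.1])))
  -- step 1 : δ‖∫‖ ≤ ∫ h
  have hstep1 : δ * ‖∫ u in (2:ℝ)..(N:ℝ), T u * ((u ^ (-δ - 1) : ℝ) : ℂ)‖
      ≤ ∫ u in (2:ℝ)..(N:ℝ), δ * (‖T u‖ * u ^ (-δ - 1)) := by
    have h2 : (∫ u in (2:ℝ)..(N:ℝ), ‖T u * ((u ^ (-δ - 1) : ℝ) : ℂ)‖)
        = ∫ u in (2:ℝ)..(N:ℝ), ‖T u‖ * u ^ (-δ - 1) := by
      apply intervalIntegral.integral_congr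
      intro u hu
      rw [Set.uIcc_of_le hN2] at hu
      simp only [norm_mul, Complex.norm_real, Real.norm_eq_abs]
      rw [_root_.abs_of_nonneg (Real.rpow_nonneg (by linarith [hu.1]) _)]
    have h3 : 0 ≤ ∫ u in (2:ℝ)..(N:ℝ), ‖T u‖ * u ^ (-δ - 1) := by
      apply intervalIntegral.integral_nonneg hN2
      intro u hu
      exact mul_nonneg (norm_nonneg _) (Real.rpow_nonneg (by linarith [hu.1]) _)
    have h1 := intervalIntegral.norm_integral_le_abs_integral_norm
      (f := fun u => T u * ((u ^ (-δ - 1) : ℝ) : ℂ)) (a := (2:ℝ)) (b := (N:ℝ)) (μ := volume)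
    rw [h2, _root_.abs_of_nonneg h3] at h1
    rw [intervalIntegral.integral_const_mul]
    nlinarith
  -- step 2 : for every ε > 0
  have hstep2 : ∀ ε : ℝ, 0 < ε →
      (∫ u in (2:ℝ)..(N:ℝ), δ * (‖T u‖ * u ^ (-δ - 1)))
        ≤ ε / 2 * I + 1 / (2 * ε) * ∫ u in (2:ℝ)..(N:ℝ), Y u := by
    intro ε hε
    have hmono := intervalIntegral.integral_mono_on hN2 hhint
      ((hXint.const_mul (ε / 2)).add (hYint.const_mul (1 / (2 * ε)))) ?_
    · calc (∫ u in (2:ℝ)..(N:ℝ), δ * (‖T u‖ * u ^ (-δ - 1))) ≤ _ := hmono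
        _ = ε / 2 * I + 1 / (2 * ε) * ∫ u in (2:ℝ)..(N:ℝ), Y u := by
            rw [intervalIntegral.integral_add (hXint.const_mul _) (hYint.const_mul _),
              intervalIntegral.integral_const_mul, intervalIntegral.integral_const_mul]
    · intro u hu
      have hu2 : (2:ℝ) ≤ u := hu.1
      have hw : (0:ℝ) < u * Real.log u := by
        have : (0:ℝ) < Real.log u := Real.log_pos (by linarith)
        positivity
      have hq0 : (0:ℝ) ≤ u ^ (-δ - 1) := Real.rpow_nonneg (by linarith) _
      set P := ‖T u‖ with hP
      set q := u ^ (-δ - 1) with hq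
      set w := u * Real.log u with hwdef
      have key : δ * (P * q) ≤ (ε ^ 2 * P ^ 2 + δ ^ 2 * w ^ 2 * q ^ 2) / (2 * ε * w) := by
        rw [le_div_iff₀ (by positivity)]
        nlinarith [sq_nonneg (ε * P - δ * w * q)]
      have heq : (ε ^ 2 * P ^ 2 + δ ^ 2 * w ^ 2 * q ^ 2) / (2 * ε * w)
          = ε / 2 * (P ^ 2 / w) + 1 / (2 * ε) * (δ ^ 2 * w * q ^ 2) := by
        field_simp
      calc δ * (P * q) ≤ (ε ^ 2 * P ^ 2 + δ ^ 2 * w ^ 2 * q ^ 2) / (2 * ε * w) := key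
        _ = ε / 2 * (P ^ 2 / w) + 1 / (2 * ε) * (δ ^ 2 * w * q ^ 2) := heq
        _ = ε / 2 * (P ^ 2 / w) + 1 / (2 * ε) * Y u := by rw [hYdef]
  -- combine
  set A := δ * ‖∫ u in (2:ℝ)..(N:ℝ), T u * ((u ^ (-δ - 1) : ℝ) : ℂ)‖ with hA
  have hAbound : ∀ ε : ℝ, 0 < ε → A ≤ ε / 2 * I + 1 / (2 * ε) := by
    intro ε hε
    have h1 := hstep2 ε hε
    have h2 : 1 / (2 * ε) * (∫ u in (2:ℝ)..(N:ℝ), Y u) ≤ 1 / (2 * ε) * 1 :=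
      mul_le_mul_of_nonneg_left hW1 (by positivity)
    calc A ≤ _ := hstep1
      _ ≤ ε / 2 * I + 1 / (2 * ε) * ∫ u in (2:ℝ)..(N:ℝ), Y u := h1
      _ ≤ ε / 2 * I + 1 / (2 * ε) := by linarith
  exact aux_opt hI0 hAbound


/-- Partial summation bound: with `S(s) = ∑_{n ≤ N} a_n n^{-s}` and
`S_u(s) = ∑_{2 ≤ n ≤ u} a_n n^{-s}`, for any `σ₀ ≤ σ` and `t ∈ ℝ`,
`|S(σ+it)|² ≪ |a_1|² + |S(σ₀+it)|² + ∫_2^N |S_u(σ₀+it)|² du/(u log u)`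
with an absolute implied constant. -/
theorem dirichlet_poly_partial_summation :
    ∃ C : ℝ, 0 < C ∧ ∀ N : ℕ, 2 ≤ N → ∀ a : ℕ → ℂ, ∀ σ₀ σ t : ℝ, σ₀ ≤ σ →
      ‖∑ n ∈ Finset.Icc 1 N, a n * (n : ℂ) ^ (-(↑σ + I * ↑t))‖ ^ 2
        ≤ C * (‖a 1‖ ^ 2
            + ‖∑ n ∈ Finset.Icc 1 N, a n * (n : ℂ) ^ (-(↑σ₀ + I * ↑t))‖ ^ 2
            + ∫ u in (2 : ℝ)..(N : ℝ),
                ‖∑ n ∈ Finset.Icc 2 ⌊u⌋₊, a n * (n : ℂ) ^ (-(↑σ₀ + I * ↑t))‖ ^ 2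
                  / (u * Real.log u)) := by
  refine ⟨12, by norm_num, ?_⟩
  intro N hN a σ₀ σ t hσ
  have hN2 : (2:ℝ) ≤ (N:ℝ) := by exact_mod_cast hN
  set b : ℕ → ℂ := fun n => a n * (n : ℂ) ^ (-(↑σ₀ + I * ↑t)) with hbdef
  have hI0 : 0 ≤ ∫ u in (2:ℝ)..(N:ℝ),
      ‖∑ n ∈ Finset.Icc 2 ⌊u⌋₊, b n‖ ^ 2 / (u * Real.log u) := by
    apply intervalIntegral.integral_nonneg hN2
    intro u hu
    exact div_nonneg (sq_nonneg _) (mul_nonneg (by linarith [hu.1])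
      (Real.log_nonneg (by linarith [hu.1])))
  rcases eq_or_lt_of_le hσ with heq | hlt
  · subst heq
    nlinarith [hI0, sq_nonneg ‖a 1‖,
      sq_nonneg ‖∑ n ∈ Finset.Icc 1 N, a n * (n : ℂ) ^ (-(↑σ₀ + I * ↑t))‖]
  · set δ : ℝ := σ - σ₀ with hδdef
    have hδpos : 0 < δ := sub_pos.2 hlt
    have hS : (∑ n ∈ Finset.Icc 1 N, a n * (n:ℂ) ^ (-(↑σ + I * ↑t)))
        = ∑ n ∈ Finset.Icc 1 N, b n * (((n:ℝ) ^ (-δ) : ℝ) : ℂ) := by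
      apply Finset.sum_congr rfl
      intro n hn
      rw [Finset.mem_Icc] at hn
      have hn0 : (n:ℂ) ≠ 0 := Nat.cast_ne_zero.mpr (by omega)
      have hsplit : (-(↑σ + I * ↑t) : ℂ) = -(↑σ₀ + I * ↑t) + ((-δ : ℝ) : ℂ) := by
        rw [hδdef]; push_cast; ring
      have hcp := (Complex.ofReal_cpow (Nat.cast_nonneg n) (-δ)).symm
      rw [Complex.ofReal_natCast] at hcp
      rw [hsplit, Complex.cpow_add _ _ hn0, hcp, hbdef]
      ring
    have hdecomp := aux_decomp hN b hδpos
    have hCS := aux_CS hN b hδpos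
    have hb1 : b 1 = a 1 := by rw [hbdef]; norm_num
    have hins : Finset.Icc 1 N = insert 1 (Finset.Icc 2 N) := by
      ext m; simp only [Finset.mem_Icc, Finset.mem_insert]; omega
    have hTN : (∑ n ∈ Finset.Icc 2 N, b n) = (∑ n ∈ Finset.Icc 1 N, b n) - a 1 := by
      rw [hins, Finset.sum_insert (by simp), hb1]; ring
    set S0 := ∑ n ∈ Finset.Icc 1 N, b n with hS0
    set Iv := ∫ u in (2:ℝ)..(N:ℝ),
      ‖∑ n ∈ Finset.Icc 2 ⌊u⌋₊, b n‖ ^ 2 / (u * Real.log u) with hIv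
    set J := ∫ u in (2:ℝ)..(N:ℝ),
      (∑ n ∈ Finset.Icc 2 ⌊u⌋₊, b n) * ((u ^ (-δ - 1) : ℝ) : ℂ) with hJ
    have hNrp0 : (0:ℝ) ≤ (N:ℝ) ^ (-δ) := Real.rpow_nonneg (by linarith) _
    have hNrp1 : (N:ℝ) ^ (-δ) ≤ 1 :=
      Real.rpow_le_one_of_one_le_of_nonpos (by linarith) (by linarith)
    have h2 : ‖(((N:ℝ) ^ (-δ) : ℝ) : ℂ) * (S0 - a 1)‖ ≤ ‖S0‖ + ‖a 1‖ := by
      rw [norm_mul, Complex.norm_real, Real.norm_eq_abs, _root_.abs_of_nonneg hNrp0]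
      calc (N:ℝ) ^ (-δ) * ‖S0 - a 1‖ ≤ 1 * (‖S0‖ + ‖a 1‖) :=
            mul_le_mul hNrp1 (norm_sub_le _ _) (norm_nonneg _) (by norm_num)
        _ = ‖S0‖ + ‖a 1‖ := one_mul _
    have h3 : ‖(δ:ℂ) * J‖ ≤ Real.sqrt Iv := by
      rw [norm_mul, Complex.norm_real, Real.norm_eq_abs, _root_.abs_of_nonneg hδpos.le]
      exact hCS
    have hnorm : ‖∑ n ∈ Finset.Icc 1 N, a n * (n:ℂ) ^ (-(↑σ + I * ↑t))‖
        ≤ 2 * ‖a 1‖ + ‖S0‖ + Real.sqrt Iv := by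
      rw [hS, hdecomp, hb1, hTN]
      calc ‖a 1 + (((N:ℝ) ^ (-δ) : ℝ) : ℂ) * (S0 - a 1) + (δ:ℂ) * J‖
          ≤ ‖a 1‖ + ‖(((N:ℝ) ^ (-δ) : ℝ) : ℂ) * (S0 - a 1)‖ + ‖(δ:ℂ) * J‖ :=
            norm_add₃_le
        _ ≤ 2 * ‖a 1‖ + ‖S0‖ + Real.sqrt Iv := by linarith
    have hx0 : (0:ℝ) ≤ ‖∑ n ∈ Finset.Icc 1 N, a n * (n:ℂ) ^ (-(↑σ + I * ↑t))‖ :=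
      norm_nonneg _
    have hsq := pow_le_pow_left₀ hx0 hnorm 2
    nlinarith [hsq, Real.sq_sqrt hI0, Real.sqrt_nonneg Iv,
      sq_nonneg (2 * ‖a 1‖ - ‖S0‖), sq_nonneg (2 * ‖a 1‖ - Real.sqrt Iv),
      sq_nonneg (‖S0‖ - Real.sqrt Iv), norm_nonneg (a 1), norm_nonneg S0]
end

section
/- Let T be a finite set of real numbers contained in [T₀ + δ/2, T₀ + T − δ/2] with |t − t'| ≥ δ for distinct t, t' ∈ T, and let f : ℝ → ℂ be continuously differentiable. Then ∑_{t ∈ T} |f(t)|² ≪ (1/δ) ∫_{T₀}^{T₀+T} |f(u)|² du + (∫_{T₀}^{T₀+T} |f(u)|² du)^{1/2} · (∫_{T₀}^{T₀+T} |f'(u)|² du)^{1/2}. -/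
open MeasureTheory Set intervalIntegral

-- Memℒp 2 for continuous functions on a bounded Ioc
lemma aux_memLp2 {a b : ℝ} {g : ℝ → ℝ} (hg : Continuous g) :
    MemLp g (ENNReal.ofReal 2) (volume.restrict (Set.Ioc a b)) := by
  obtain ⟨C, hC⟩ := (isCompact_Icc (a := a) (b := b)).exists_bound_of_continuousOn
    hg.continuousOn
  refine MemLp.of_bound hg.aestronglyMeasurable C ?_
  filter_upwards [ae_restrict_mem measurableSet_Ioc] with x hx
  exact hC x (Ioc_subset_Icc_self hx)

-- Cauchy-Schwarz on Ioc
lemma aux_CS_s9 {a b : ℝ} {g h : ℝ → ℝ} (hg : Continuous g) (hh : Continuous h) :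
    ∫ x in Set.Ioc a b, ‖g x‖ * ‖h x‖
      ≤ (∫ x in Set.Ioc a b, g x ^ 2) ^ ((1:ℝ)/2) * (∫ x in Set.Ioc a b, h x ^ 2) ^ ((1:ℝ)/2) := by
  have hpq : Real.HolderConjugate 2 2 := Real.HolderConjugate.two_two
  have := integral_mul_le_Lp_mul_Lq_of_nonneg (μ := volume.restrict (Set.Ioc a b)) hpq
    (f := fun x => ‖g x‖) (g := fun x => ‖h x‖)
    (Filter.Eventually.of_forall fun x => norm_nonneg _)
    (Filter.Eventually.of_forall fun x => norm_nonneg _)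
    (aux_memLp2 hg.norm) (aux_memLp2 hh.norm)
  have e2 : ∀ x : ℝ, ‖x‖ ^ (2:ℝ) = x ^ 2 := by
    intro x
    rw [show (2:ℝ) = ((2:ℕ):ℝ) by norm_num, Real.rpow_natCast, Real.norm_eq_abs, sq_abs]
  simpa only [e2] using this

lemma aux_key (f : ℝ → ℂ) (hf : ContDiff ℝ 1 f) {δ t : ℝ} (hδ : 0 < δ) :
    ‖f t‖ ^ 2 ≤ (1/δ) * (∫ u in Set.Ioc (t - δ/2) (t + δ/2), ‖f u‖ ^ 2)
      + ∫ u in Set.Ioc (t - δ/2) (t + δ/2), 2 * (‖f u‖ * ‖deriv f u‖) := by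
  set I := Set.Ioc (t - δ/2) (t + δ/2) with hI
  have hfd : Differentiable ℝ f := hf.differentiable one_ne_zero
  set φ : ℝ → ℝ := fun u => 2 * (inner ℝ (f u) (deriv f u) : ℝ) with hφdef
  have hderiv : ∀ u : ℝ, HasDerivAt (fun x => ‖f x‖ ^ 2) (φ u) u :=
    fun u => (hfd u).hasDerivAt.norm_sq
  have hφ : Continuous φ :=
    continuous_const.mul (hf.continuous.inner (hf.continuous_deriv le_rfl))
  have h2cont : Continuous fun x => 2 * (‖f x‖ * ‖deriv f x‖) :=
    continuous_const.mul (hf.continuous.norm.mul (hf.continuous_deriv le_rfl).norm)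
  have hbound : ∀ x, |φ x| ≤ 2 * (‖f x‖ * ‖deriv f x‖) := by
    intro x
    rw [hφdef, abs_mul, abs_two]
    exact mul_le_mul_of_nonneg_left (abs_real_inner_le_norm _ _) (by norm_num)
  set B : ℝ := ∫ x in I, 2 * (‖f x‖ * ‖deriv f x‖) with hB
  have hIhint : IntegrableOn (fun x => 2 * (‖f x‖ * ‖deriv f x‖)) I volume :=
    h2cont.integrableOn_Ioc
  have hIg : IntegrableOn (fun u => ‖f u‖ ^ 2) I volume :=
    (hf.continuous.norm.pow 2).integrableOn_Ioc
  have step : ∀ u ∈ I, ‖f t‖ ^ 2 ≤ ‖f u‖ ^ 2 + B := by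
    intro u hu
    have ftc : ∫ x in u..t, φ x = ‖f t‖ ^ 2 - ‖f u‖ ^ 2 :=
      intervalIntegral.integral_eq_sub_of_hasDerivAt (fun x _ => hderiv x)
        (hφ.intervalIntegrable u t)
    have hsub : Set.uIoc u t ⊆ I := by
      rw [Set.uIoc, hI]
      apply Set.Ioc_subset_Ioc
      · exact le_min hu.1.le (by linarith)
      · exact max_le hu.2 (by linarith)
    have h1 : ‖∫ x in u..t, φ x‖ ≤ ∫ x in Set.uIoc u t, ‖φ x‖ :=
      intervalIntegral.norm_integral_le_integral_norm_uIoc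
    have h2 : ∫ x in Set.uIoc u t, ‖φ x‖ ≤ ∫ x in I, ‖φ x‖ :=
      setIntegral_mono_set hφ.norm.integrableOn_Ioc
        (Filter.Eventually.of_forall fun x => norm_nonneg _) (HasSubset.Subset.eventuallyLE hsub)
    have h3 : ∫ x in I, ‖φ x‖ ≤ B :=
      setIntegral_mono hφ.norm.integrableOn_Ioc hIhint (fun x => by
        simpa [Real.norm_eq_abs] using hbound x)
    have h4 : ‖f t‖ ^ 2 - ‖f u‖ ^ 2 ≤ B := by
      calc ‖f t‖ ^ 2 - ‖f u‖ ^ 2 = ∫ x in u..t, φ x := ftc.symm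
        _ ≤ ‖∫ x in u..t, φ x‖ := le_abs_self _
        _ ≤ B := le_trans h1 (le_trans h2 h3)
    linarith
  have hvol : (volume I).toReal = δ := by
    rw [hI, Real.volume_Ioc]
    rw [show t + δ/2 - (t - δ/2) = δ by ring, ENNReal.toReal_ofReal hδ.le]
  have hmono : ∫ _ in I, ‖f t‖ ^ 2 ≤ ∫ u in I, (‖f u‖ ^ 2 + B) :=
    setIntegral_mono_on
      (integrableOn_const measure_Ioc_lt_top.ne)
      (hIg.add (integrableOn_const measure_Ioc_lt_top.ne))
      measurableSet_Ioc step
  rw [setIntegral_const, smul_eq_mul, measureReal_def, hvol,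
    integral_add hIg (integrableOn_const measure_Ioc_lt_top.ne),
    setIntegral_const, smul_eq_mul, measureReal_def, hvol] at hmono
  have := hδ
  rw [show (1/δ) * (∫ u in I, ‖f u‖ ^ 2) + B = (((∫ u in I, ‖f u‖ ^ 2) + δ * B)) / δ by
    field_simp]
  rw [le_div_iff₀ hδ]
  linarith

lemma aux_sum (𝒯 : Finset ℝ) (s : ℝ → Set ℝ) (S : Set ℝ)
    (hmeas : ∀ t ∈ 𝒯, MeasurableSet (s t)) (hdisj : Set.Pairwise ↑𝒯 (Function.onFun Disjoint s))
    (hsub : ∀ t ∈ 𝒯, s t ⊆ S) {h : ℝ → ℝ} (hint : IntegrableOn h S volume)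
    (hpos : ∀ x, 0 ≤ h x) :
    ∑ t ∈ 𝒯, ∫ x in s t, h x ≤ ∫ x in S, h x := by
  rw [← integral_biUnion_finset 𝒯 hmeas hdisj
    (fun i hi => hint.mono_set (hsub i hi))]
  exact setIntegral_mono_set hint (Filter.Eventually.of_forall hpos)
    (HasSubset.Subset.eventuallyLE (Set.iUnion₂_subset hsub))

/-- Gallagher-type lemma: for a well-spaced finite set `𝒯 ⊆ [T₀+δ/2, T₀+T−δ/2]` and a
continuously differentiable `f`,
`∑_{t ∈ 𝒯} |f(t)|² ≪ (1/δ)∫|f|² + (∫|f|²)^{1/2}(∫|f'|²)^{1/2}`. -/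
theorem gallagher_well_spaced :
    ∃ C : ℝ, 0 < C ∧ ∀ T₀ T δ : ℝ, 0 < δ → δ < T → ∀ 𝒯 : Finset ℝ,
      (∀ t ∈ 𝒯, T₀ + δ / 2 ≤ t ∧ t ≤ T₀ + T - δ / 2) →
      (∀ t ∈ 𝒯, ∀ t' ∈ 𝒯, t ≠ t' → δ ≤ |t - t'|) →
      ∀ f : ℝ → ℂ, ContDiff ℝ 1 f →
        (∑ t ∈ 𝒯, ‖f t‖ ^ 2)
          ≤ C * ((1 / δ) * (∫ u in T₀..(T₀ + T), ‖f u‖ ^ 2)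
              + (∫ u in T₀..(T₀ + T), ‖f u‖ ^ 2) ^ ((1 : ℝ) / 2)
                * (∫ u in T₀..(T₀ + T), ‖deriv f u‖ ^ 2) ^ ((1 : ℝ) / 2)) := by
  refine ⟨2, by norm_num, fun T₀ T δ hδ hδT 𝒯 hloc hW f hf => ?_⟩
  have hab : T₀ ≤ T₀ + T := by linarith
  simp only [intervalIntegral.integral_of_le hab]
  set S := Set.Ioc T₀ (T₀ + T) with hS
  set s : ℝ → Set ℝ := fun t => Set.Ioc (t - δ/2) (t + δ/2) with hsdef
  have hmeas : ∀ t ∈ 𝒯, MeasurableSet (s t) := fun t _ => measurableSet_Ioc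
  have hdisj : Set.Pairwise ↑𝒯 (Function.onFun Disjoint s) := by
    intro t ht t' ht' hne
    simp only [Function.onFun, hsdef, Set.Ioc_disjoint_Ioc]
    rcases le_abs.mp (hW t ht t' ht' hne) with h1 | h1
    · calc min (t + δ/2) (t' + δ/2) ≤ t' + δ/2 := min_le_right _ _
        _ ≤ t - δ/2 := by linarith
        _ ≤ max (t - δ/2) (t' - δ/2) := le_max_left _ _
    · calc min (t + δ/2) (t' + δ/2) ≤ t + δ/2 := min_le_left _ _
        _ ≤ t' - δ/2 := by linarith
        _ ≤ max (t - δ/2) (t' - δ/2) := le_max_right _ _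
  have hsub : ∀ t ∈ 𝒯, s t ⊆ S := by
    intro t ht
    obtain ⟨h1, h2⟩ := hloc t ht
    exact Set.Ioc_subset_Ioc (by linarith) (by linarith)
  have hgcont : Continuous fun u => ‖f u‖ ^ 2 := hf.continuous.norm.pow 2
  have h2cont : Continuous fun x => 2 * (‖f x‖ * ‖deriv f x‖) :=
    continuous_const.mul (hf.continuous.norm.mul (hf.continuous_deriv le_rfl).norm)
  have hgint : IntegrableOn (fun u => ‖f u‖ ^ 2) S volume := hgcont.integrableOn_Ioc
  have h2int : IntegrableOn (fun x => 2 * (‖f x‖ * ‖deriv f x‖)) S volume :=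
    h2cont.integrableOn_Ioc
  have step1 : ∑ t ∈ 𝒯, ‖f t‖ ^ 2
      ≤ ∑ t ∈ 𝒯, ((1/δ) * (∫ u in s t, ‖f u‖ ^ 2) + ∫ u in s t, 2 * (‖f u‖ * ‖deriv f u‖)) :=
    Finset.sum_le_sum fun t _ => aux_key f hf hδ
  have step2 : ∑ t ∈ 𝒯, (∫ u in s t, ‖f u‖ ^ 2) ≤ ∫ u in S, ‖f u‖ ^ 2 :=
    aux_sum 𝒯 s S hmeas hdisj hsub hgint (fun x => by positivity)
  have step3 : ∑ t ∈ 𝒯, (∫ u in s t, 2 * (‖f u‖ * ‖deriv f u‖))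
      ≤ ∫ u in S, 2 * (‖f u‖ * ‖deriv f u‖) :=
    aux_sum 𝒯 s S hmeas hdisj hsub h2int (fun x => by positivity)
  have hCS : ∫ u in S, 2 * (‖f u‖ * ‖deriv f u‖)
      ≤ 2 * ((∫ u in S, ‖f u‖ ^ 2) ^ ((1:ℝ)/2) * (∫ u in S, ‖deriv f u‖ ^ 2) ^ ((1:ℝ)/2)) := by
    rw [MeasureTheory.integral_const_mul]
    have := aux_CS_s9 (a := T₀) (b := T₀ + T)
      (g := fun x => ‖f x‖) (h := fun x => ‖deriv f x‖)
      hf.continuous.norm (hf.continuous_deriv le_rfl).norm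
    simp only [norm_norm] at this
    linarith
  have hGnn : 0 ≤ ∫ u in S, ‖f u‖ ^ 2 :=
    setIntegral_nonneg measurableSet_Ioc (fun x _ => by positivity)
  have hABnn : 0 ≤ (∫ u in S, ‖f u‖ ^ 2) ^ ((1:ℝ)/2) * (∫ u in S, ‖deriv f u‖ ^ 2) ^ ((1:ℝ)/2) := by
    apply mul_nonneg <;> exact Real.rpow_nonneg (setIntegral_nonneg measurableSet_Ioc
      (fun x _ => by positivity)) _
  have hδinv : (0:ℝ) ≤ 1/δ := by positivity
  calc ∑ t ∈ 𝒯, ‖f t‖ ^ 2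
      ≤ ∑ t ∈ 𝒯, ((1/δ) * (∫ u in s t, ‖f u‖ ^ 2)
          + ∫ u in s t, 2 * (‖f u‖ * ‖deriv f u‖)) := step1
    _ = (1/δ) * (∑ t ∈ 𝒯, ∫ u in s t, ‖f u‖ ^ 2)
          + ∑ t ∈ 𝒯, ∫ u in s t, 2 * (‖f u‖ * ‖deriv f u‖) := by
        rw [Finset.sum_add_distrib, Finset.mul_sum]
    _ ≤ (1/δ) * (∫ u in S, ‖f u‖ ^ 2) + ∫ u in S, 2 * (‖f u‖ * ‖deriv f u‖) :=
        add_le_add (mul_le_mul_of_nonneg_left step2 hδinv) step3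
    _ ≤ (1/δ) * (∫ u in S, ‖f u‖ ^ 2)
          + 2 * ((∫ u in S, ‖f u‖ ^ 2) ^ ((1:ℝ)/2) * (∫ u in S, ‖deriv f u‖ ^ 2) ^ ((1:ℝ)/2)) :=
        add_le_add_right hCS _
    _ ≤ 2 * ((1/δ) * (∫ u in S, ‖f u‖ ^ 2)
          + (∫ u in S, ‖f u‖ ^ 2) ^ ((1:ℝ)/2) * (∫ u in S, ‖deriv f u‖ ^ 2) ^ ((1:ℝ)/2)) := by
        nlinarith [mul_nonneg hδinv hGnn]
end
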